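/- Let m, n be positive integers and f, g, r ∈ ℤ[x]. If f(r(x)) ≡ 0 (mod (n, f(x))) and x^m ≡ g(x) (mod (n, f(x))), then r(x)^m ≡ g(r(x)) (mod (n, f(x))). -/
import Mathlib


open Polynomial

theorem stmt_12 (m n : ℕ) (hm : 0 < m) (hn : 0 < n) (f g r : ℤ[X])
    (I : Ideal ℤ[X]) (hI : I = Ideal.span {(n : ℤ[X]), f})
    (hroot : f.comp r ∈ I) (hpow : X ^ m - g ∈ I) :
    r ^ m - g.comp r ∈ I := by
  rw [hI] at hpow
  obtain ⟨a, b, hab⟩ := Ideal.mem_span_pair.mp hpow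
  have hn' : (n : ℤ[X]) ∈ I := hI ▸ Ideal.subset_span (by simp)
  have : r ^ m - g.comp r = a.comp r * n + b.comp r * f.comp r := by
    have := congrArg (fun p => p.comp r) hab
    simpa [sub_comp, pow_comp, X_comp, add_comp, mul_comp, natCast_comp] using this.symm
  rw [this]
  exact I.add_mem (I.mul_mem_left _ hn') (I.mul_mem_left _ hroot)
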